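/- Let (X, ≤) be a lower 1-transitive linear order and let s be an invariant partition of X. Then each equivalence class of s, regarded as a suborder of X, is lower 1-transitive, and any two equivalence classes are lower isomorphic as suborders: for all x, y ∈ X, the suborders {z ∈ X : z ∼ x and z ≤ x} and {w ∈ X : w ∼ y and w ≤ y} are order-isomorphic. -/

import Mathlib

/-- A linear order is lower 1-transitive if any two of its initial segments
are order-isomorphic. -/
def LowerOneTransitive (X : Type*) [LinearOrder X] : Prop :=
  ∀ a b : X, Nonempty (Set.Iic a ≃o Set.Iic b)

/-- An invariant partition: an equivalence relation with convex classes which is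
preserved by every order isomorphism between initial segments. -/
def IsInvariantPartition {X : Type*} [LinearOrder X] (s : Setoid X) : Prop :=
  (∀ x y z : X, s.r x y → x ≤ z → z ≤ y → s.r z x) ∧
  (∀ (a b : X) (f : Set.Iic a ≃o Set.Iic b) (x y : Set.Iic a),
    s.r (x : X) (y : X) ↔ s.r ((f x : X)) ((f y : X)))

/-- The classes of an invariant partition of a lower 1-transitive linear order are
lower 1-transitive and pairwise lower isomorphic: for all `x y : X`, the suborders
`{z | z ∼ x ∧ z ≤ x}` and `{w | w ∼ y ∧ w ≤ y}` are order-isomorphic. -/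
theorem invariantPartition_classes_lowerIsomorphic {X : Type*} [LinearOrder X]
    (hX : LowerOneTransitive X) (s : Setoid X) (hs : IsInvariantPartition s) :
    ∀ x y : X,
      Nonempty ({z : X | s.r z x ∧ z ≤ x} ≃o {w : X | s.r w y ∧ w ≤ y}) := by
  intro x y
  obtain ⟨f⟩ := hX x y
  have htop : f ⟨x, le_rfl⟩ = ⟨y, le_rfl⟩ := f.map_top
  have hmem : ∀ z : Set.Iic x, s.r (z : X) x ↔ s.r ((f z : X)) y := by
    intro z
    have := hs.2 x y f z ⟨x, le_rfl⟩
    rwa [htop] at this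
  have hmem' : ∀ w : Set.Iic y, s.r (w : X) y ↔ s.r ((f.symm w : X)) x := by
    intro w
    have := hs.2 x y f (f.symm w) ⟨x, le_rfl⟩
    rw [htop, f.apply_symm_apply] at this
    exact this.symm
  refine ⟨{
    toFun := fun z => ⟨(f ⟨z, z.2.2⟩ : X), (hmem ⟨z, z.2.2⟩).mp z.2.1, (f ⟨z, z.2.2⟩).2⟩
    invFun := fun w => ⟨(f.symm ⟨w, w.2.2⟩ : X), (hmem' ⟨w, w.2.2⟩).mp w.2.1,
      (f.symm ⟨w, w.2.2⟩).2⟩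
    left_inv := fun z => by
      ext
      exact (congrArg Subtype.val (f.symm_apply_apply ⟨z, z.2.2⟩) :)
    right_inv := fun w => by
      ext
      exact (congrArg Subtype.val (f.apply_symm_apply ⟨w, w.2.2⟩) :)
    map_rel_iff' := by
      intro z w
      simp only [Equiv.coe_fn_mk, Subtype.mk_le_mk, ← Subtype.coe_le_coe]
      exact f.le_iff_le }⟩
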